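/- Let n1,n2,n3,α0,α1,α2,α3 ∈ ℂ with each n_i ≠ 0 and 2n1n2n3−(n1+n2)n3−2(n1+n2) = 0. Let U ⊆ ℂ be open with 0 ∉ U and δ(t) ≠ 0 for t ∈ U, and let x, y : ℂ → ℂ be differentiable on U with x(t) ≠ 1 for t ∈ U, satisfying the generalized Painlevé V system with parameters (n1,n2,n3; α0,α1,α2,α3) on U. Then the functions x̃(t) := x(−t)/(x(−t)−1) and ỹ(t) := −(x(−t)−1)·((x(−t)−1)·y(−t)+α2) satisfy the generalized Painlevé V system on the set {t : −t ∈ U} with parameters (n2,n1,n3; α1,α0,α2,α3), provided the quantity δ(t) formed from these new parameters is nonzero on that set. -/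

import Mathlib

/-- The function `δ(t)` of the generalized Painlevé V system. -/
noncomputable def pvDelta (n1 n2 b0 b1 b2 b3 : ℂ) (t : ℂ) : ℂ :=
  t * (2 * n2 * b0 + 2 * n1 * b1 - 2 * (n1 + n2) * b2
    + 2 * (2 * n1 * n2 - n1 - n2) * b3 - (n1 - n2) * t)

/-- `x, y : ℂ → ℂ` are differentiable on `U` and satisfy the generalized
Painlevé V system with parameters `(n1,n2,n3; b0,b1,b2,b3)` on `U`. -/
def PVSystem (n1 n2 n3 b0 b1 b2 b3 : ℂ) (U : Set ℂ) (x y : ℂ → ℂ) : Prop :=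
  DifferentiableOn ℂ x U ∧ DifferentiableOn ℂ y U ∧
  ∀ t ∈ U,
    (pvDelta n1 n2 b0 b1 b2 b3 t * deriv x t =
      2 * n1 * n2 * (x t) ^ 3 * y t - 2 * n1 * n2 * (x t) ^ 2 * y t
      - 2 * n1 * (b1 - n2 * b2) * (x t) ^ 2
      + (2 * n2 * b0 + 2 * n1 * b1 - 2 * n1 * n2 * b2 + (n1 + n2) * t) * x t
      - (n1 + n2) * t)
    ∧
    (pvDelta n1 n2 b0 b1 b2 b3 t * deriv y t =
      -(2 * n1) * (2 * n2 - 1) * (x t) ^ 2 * (y t) ^ 2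
      + 2 * (2 * n1 * n2 - n1 - n2) * x t * (y t) ^ 2
      + 2 * n1 * (2 * b1 - (3 * n2 - 2) * b2) * x t * y t
      - (2 * n2 * b0 + 2 * n1 * b1 - 2 * (2 * n1 * n2 - n1 - n2) * b2 + (n1 + n2) * t) * y t
      + 2 * n1 * b2 * (b1 + b2 - n2 * b2))

set_option maxHeartbeats 1000000 in
/-- Birational symmetry `π` of the generalized Painlevé V system:
`x̃(t) = x(−t)/(x(−t)−1)`, `ỹ(t) = −(x(−t)−1)·((x(−t)−1)·y(−t)+α2)`,
with parameters `(n2,n1,n3; α1,α0,α2,α3)`. -/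
theorem pv_symmetry_pi (n1 n2 n3 a0 a1 a2 a3 : ℂ)
    (hn1 : n1 ≠ 0) (hn2 : n2 ≠ 0) (hn3 : n3 ≠ 0)
    (hrel : 2 * n1 * n2 * n3 - (n1 + n2) * n3 - 2 * (n1 + n2) = 0)
    (U : Set ℂ) (hU : IsOpen U) (h0U : (0 : ℂ) ∉ U)
    (hδ : ∀ t ∈ U, pvDelta n1 n2 a0 a1 a2 a3 t ≠ 0)
    (x y : ℂ → ℂ) (hx : ∀ t ∈ U, x t ≠ 1)
    (hxy : PVSystem n1 n2 n3 a0 a1 a2 a3 U x y)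
    (hδ' : ∀ t ∈ ({t : ℂ | -t ∈ U} : Set ℂ), pvDelta n2 n1 a1 a0 a2 a3 t ≠ 0) :
    PVSystem n2 n1 n3 a1 a0 a2 a3 {t : ℂ | -t ∈ U}
      (fun t => x (-t) / (x (-t) - 1))
      (fun t => -(x (-t) - 1) * ((x (-t) - 1) * y (-t) + a2)) := by
  obtain ⟨hdx, hdy, heq⟩ := hxy
  have key : ∀ t ∈ ({t : ℂ | -t ∈ U} : Set ℂ),
      HasDerivAt (fun t => x (-t) / (x (-t) - 1))
        (deriv x (-t) / (x (-t) - 1) ^ 2) t ∧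
      HasDerivAt (fun t => -(x (-t) - 1) * ((x (-t) - 1) * y (-t) + a2))
        (2 * (x (-t) - 1) * deriv x (-t) * y (-t)
          + (x (-t) - 1) ^ 2 * deriv y (-t) + a2 * deriv x (-t)) t := by
    intro t ht
    have htU : -t ∈ U := ht
    have hXd : DifferentiableAt ℂ x (-t) := hdx.differentiableAt (hU.mem_nhds htU)
    have hYd : DifferentiableAt ℂ y (-t) := hdy.differentiableAt (hU.mem_nhds htU)
    have hA : HasDerivAt (fun s => x (-s)) (-deriv x (-t)) t := by
      have := hXd.hasDerivAt.comp t (hasDerivAt_neg t)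
      rw [mul_neg_one] at this
      exact this
    have hB : HasDerivAt (fun s => y (-s)) (-deriv y (-t)) t := by
      have := hYd.hasDerivAt.comp t (hasDerivAt_neg t)
      rw [mul_neg_one] at this
      exact this
    have hne : x (-t) - 1 ≠ 0 := sub_ne_zero.2 (hx (-t) htU)
    constructor
    · have h := hA.div (hA.sub_const 1) hne
      refine h.congr_deriv ?_
      field_simp
      ring
    · have h := ((hA.sub_const 1).neg.mul (((hA.sub_const 1).mul hB).add_const a2))
      refine h.congr_deriv ?_
      simp only [Pi.mul_apply, Pi.neg_apply]
      ring
  refine ⟨fun t ht => ((key t ht).1.differentiableAt).differentiableWithinAt,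
    fun t ht => ((key t ht).2.differentiableAt).differentiableWithinAt, ?_⟩
  intro t ht
  have htU : -t ∈ U := ht
  have hdne : pvDelta n1 n2 a0 a1 a2 a3 (-t) ≠ 0 := hδ (-t) htU
  have hne : x (-t) - 1 ≠ 0 := sub_ne_zero.2 (hx (-t) htU)
  obtain ⟨E1, E2⟩ := heq (-t) htU
  have hX' : deriv x (-t) =
      (2 * n1 * n2 * (x (-t)) ^ 3 * y (-t) - 2 * n1 * n2 * (x (-t)) ^ 2 * y (-t)
      - 2 * n1 * (a1 - n2 * a2) * (x (-t)) ^ 2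
      + (2 * n2 * a0 + 2 * n1 * a1 - 2 * n1 * n2 * a2 + (n1 + n2) * (-t)) * x (-t)
      - (n1 + n2) * (-t)) / pvDelta n1 n2 a0 a1 a2 a3 (-t) := by
    rw [eq_div_iff hdne]; linear_combination E1
  have hY' : deriv y (-t) =
      (-(2 * n1) * (2 * n2 - 1) * (x (-t)) ^ 2 * (y (-t)) ^ 2
      + 2 * (2 * n1 * n2 - n1 - n2) * x (-t) * (y (-t)) ^ 2
      + 2 * n1 * (2 * a1 - (3 * n2 - 2) * a2) * x (-t) * y (-t)
      - (2 * n2 * a0 + 2 * n1 * a1 - 2 * (2 * n1 * n2 - n1 - n2) * a2 + (n1 + n2) * (-t)) * y (-t)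
      + 2 * n1 * a2 * (a1 + a2 - n2 * a2)) / pvDelta n1 n2 a0 a1 a2 a3 (-t) := by
    rw [eq_div_iff hdne]; linear_combination E2
  have hd : pvDelta n2 n1 a1 a0 a2 a3 t = -pvDelta n1 n2 a0 a1 a2 a3 (-t) := by
    simp only [pvDelta]; ring
  constructor
  · rw [(key t ht).1.deriv, hd, hX']
    field_simp [hdne, hne, sub_ne_zero.2 (hx (-t) htU)]
    ring
  · rw [(key t ht).2.deriv, hd, hX', hY']
    field_simp [hdne, hne, sub_ne_zero.2 (hx (-t) htU)]
    ring
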